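/- For every n ≥ 2, the grog numbers of the finite Jaco graphs are strictly increasing: g(J_{n+1}(1)) > g(J_n(1)). -/

import Mathlib

/-- In-degree of vertex `v_i` in the infinite Jaco graph `J_∞(1)`, defined by strong
recursion: `d⁻(v_i)` is the number of `k < i` with an arc `(v_k, v_i)`, where for `k < i`
the arc `(v_k, v_i)` is present iff `2k - d⁻(v_k) ≥ i` (and `k ≥ 1`). -/
noncomputable def jacoInDeg (n : ℕ) : ℕ :=
  Nat.strongRecOn n (fun n ih =>
    ((Finset.range n).attach.filter
      (fun k => 1 ≤ k.1 ∧ n ≤ 2 * k.1 - ih k.1 (Finset.mem_range.mp k.2))).card)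

/-- The arc `(v_i, v_j)` of the infinite Jaco graph `J_∞(1)` (vertices indexed from 1):
present iff `i < j` and `2i - d⁻(v_i) ≥ j`. -/
def jacoArc (i j : ℕ) : Prop :=
  1 ≤ i ∧ i < j ∧ j ≤ 2 * i - jacoInDeg i

noncomputable instance (i j : ℕ) : Decidable (jacoArc i j) := by unfold jacoArc; infer_instance

/-- Out-degree of `v_i` in the finite Jaco graph `J_n(1)` (vertex set `{v_1, …, v_n}`). -/
noncomputable  def jacoOutDeg (n i : ℕ) : ℕ :=
  ((Finset.Icc 1 n).filter (fun j => jacoArc i j)).card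

/-- In-degree of `v_i` in the finite Jaco graph `J_n(1)`. -/
noncomputable def jacoInDegFin (n i : ℕ) : ℕ :=
  ((Finset.Icc 1 n).filter (fun k => jacoArc k i)).card

/-- Adjacency in the competition graph `C(J_n(1))`: distinct vertices `v_a, v_b` of
`J_n(1)` are adjacent iff some vertex `v_w` of `J_n(1)` is a common out-neighbour. -/
def jacoCompAdj (n a b : ℕ) : Prop :=
  a ≠ b ∧ a ∈ Finset.Icc 1 n ∧ b ∈ Finset.Icc 1 n ∧
    ∃ w ∈ Finset.Icc 1 n, jacoArc a w ∧ jacoArc b w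


/-- The arc set of the finite Jaco graph `J_n(1)` as a finite set of pairs. -/
noncomputable def jacoArcs (n : ℕ) : Finset (ℕ × ℕ) :=
  (Finset.Icc 1 n ×ˢ Finset.Icc 1 n).filter (fun a => jacoArc a.1 a.2)

/-- A state of the Grog algorithm: a finite set of remaining arcs (on vertices `v_1, v_2, …`,
identified with positive naturals) together with the current population of every vertex. -/
structure PPState where
  arcs : Finset (ℕ × ℕ)
  pop : ℕ → ℕ

/-- One predation step along the arc `a = (u, w)`: the arc is deleted and the populations
of `u` and `w` each decrease by `1`. -/
def predStep (s : PPState) (a : ℕ × ℕ) : PPState :=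
  ⟨s.arcs.erase a, fun v => if v = a.1 ∨ v = a.2 then s.pop v - 1 else s.pop v⟩

/-- The arc `a` may be predated along in state `s`: it is a current arc and both of its
endpoints have current population at least `1`. -/
def validArc (s : PPState) (a : ℕ × ℕ) : Prop :=
  a ∈ s.arcs ∧ 1 ≤ s.pop a.1 ∧ 1 ≤ s.pop a.2

/-- Run a sequence of predation steps from a state. -/
def runSeq : PPState → List (ℕ × ℕ) → PPState
  | s, [] => s
  | s, a :: l => runSeq (predStep s a) l

/-- The sequence of predation steps is valid from state `s`. -/
def ValidSeq : PPState → List (ℕ × ℕ) → Prop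
  | _, [] => True
  | s, a :: l => validArc s a ∧ ValidSeq (predStep s a) l

/-- No further predation step is possible. -/
def Terminal (s : PPState) : Prop := ∀ a ∈ s.arcs, ¬ validArc s a

/-- A predator-prey strategy from state `s`: a maximal valid sequence of predation steps. -/
def IsStrategy (s : PPState) (l : List (ℕ × ℕ)) : Prop :=
  ValidSeq s l ∧ Terminal (runSeq s l)

/-- The initial state of the digraph with arc set `A`, with initial populations `ρ(v_i) = i`. -/
def initState (A : Finset (ℕ × ℕ)) : PPState := ⟨A, id⟩

/-- The (residual) population of a state, summed over the vertices `v_1, …, v_n`. -/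
def resid (n : ℕ) (s : PPState) : ℕ := ∑ v ∈ Finset.Icc 1 n, s.pop v

/-- The grog number of the digraph on `v_1, …, v_n` with arc set `A`: the minimum of the
residual population over all predator-prey strategies. -/
noncomputable def grogD (n : ℕ) (A : Finset (ℕ × ℕ)) : ℕ :=
  sInf {r | ∃ l, IsStrategy (initState A) l ∧ resid n (runSeq (initState A) l) = r}

/-- `A` is an orientation of the labelled graph obtained from the simple graph `G` via the
bijective labelling `f` of its vertices by `v_1, …, v_n`. -/
def LabelledOrientation {V : Type*} (G : SimpleGraph V) (n : ℕ) (f : V → ℕ)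
    (A : Finset (ℕ × ℕ)) : Prop :=
  Function.Injective f ∧ Set.range f = ↑(Finset.Icc 1 n) ∧
  (∀ u v, G.Adj u v ↔ ((f u, f v) ∈ A ∨ (f v, f u) ∈ A)) ∧
  (∀ u v, ¬(((f u, f v) ∈ A) ∧ ((f v, f u) ∈ A))) ∧
  (∀ a ∈ A, ∃ u v, G.Adj u v ∧ a = (f u, f v))

/-- `A` is an orientation of the path `P_n` whose vertices, in path order, are labelled
`p 0, p 1, …, p (n-1)`, where `p` is a bijection onto `{1, …, n}`. -/
def PathOrientation (n : ℕ) (p : ℕ → ℕ) (A : Finset (ℕ × ℕ)) : Prop :=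
  Set.BijOn p (Set.Iio n) (Set.Icc 1 n) ∧
  (∀ i, i + 1 < n →
    (((p i, p (i+1)) ∈ A ∨ (p (i+1), p i) ∈ A) ∧
      ¬(((p i, p (i+1)) ∈ A) ∧ ((p (i+1), p i) ∈ A)))) ∧
  (∀ a ∈ A, ∃ i, i + 1 < n ∧ (a = (p i, p (i+1)) ∨ a = (p (i+1), p i)))

/-- `A` is an orientation of the cycle `C_n` whose vertices, in cyclic order, are labelled
`p 0, p 1, …, p (n-1)`, where `p` is a bijection onto `{1, …, n}`. -/
def CycleOrientation (n : ℕ) (p : ℕ → ℕ) (A : Finset (ℕ × ℕ)) : Prop :=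
  Set.BijOn p (Set.Iio n) (Set.Icc 1 n) ∧
  (∀ i < n,
    (((p i, p ((i+1) % n)) ∈ A ∨ (p ((i+1) % n), p i) ∈ A) ∧
      ¬(((p i, p ((i+1) % n)) ∈ A) ∧ ((p ((i+1) % n), p i) ∈ A)))) ∧
  (∀ a ∈ A, ∃ i < n, a = (p i, p ((i+1) % n)) ∨ a = (p ((i+1) % n), p i))

/-- The grog number of the finite Jaco graph `J_n(1)`. -/
noncomputable def grogJaco (n : ℕ) : ℕ := grogD n (jacoArcs n)


-- ## Auxiliary development

theorem jacoInDeg_eq (n : ℕ) :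
    jacoInDeg n = ((Finset.range n).filter (fun k => 1 ≤ k ∧ n ≤ 2 * k - jacoInDeg k)).card := by
  conv_lhs => rw [jacoInDeg, Nat.strongRecOn_eq]
  refine Finset.card_bij (fun a _ => a.1) ?_ ?_ ?_
  · rintro ⟨a, ha⟩ h
    simp only [Finset.mem_filter] at h ⊢
    exact ⟨ha, h.2⟩
  · rintro ⟨a, _⟩ _ ⟨b, _⟩ _ h
    simpa using h
  · intro b hb
    simp only [Finset.mem_filter] at hb
    refine ⟨⟨b, hb.1⟩, Finset.mem_filter.mpr ⟨Finset.mem_attach _ _, hb.2.1, hb.2.2⟩, rfl⟩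

theorem jacoInDeg_le_half (m : ℕ) : jacoInDeg m ≤ m / 2 := by
  rw [jacoInDeg_eq]
  calc ((Finset.range m).filter (fun k => 1 ≤ k ∧ m ≤ 2 * k - jacoInDeg k)).card
      ≤ (Finset.Ico ((m+1)/2) m).card := by
        apply Finset.card_le_card
        intro k hk
        simp only [Finset.mem_filter, Finset.mem_range] at hk
        have h1 := hk.2.2
        have : m ≤ 2 * k := le_trans h1 (Nat.sub_le _ _)
        simp only [Finset.mem_Ico]
        omega
    _ = m - (m+1)/2 := by rw [Nat.card_Ico]
    _ ≤ m / 2 := by omega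

theorem one_le_jacoInDeg (k : ℕ) (hk : 2 ≤ k) : 1 ≤ jacoInDeg k := by
  rw [jacoInDeg_eq]
  refine Finset.card_pos.mpr ⟨k - 1, Finset.mem_filter.mpr ⟨Finset.mem_range.mpr (by omega), by omega, ?_⟩⟩
  have h1 : jacoInDeg (k-1) ≤ (k-1)/2 := jacoInDeg_le_half _
  omega

theorem two_mul_jacoInDeg_le (n : ℕ) (hn : 2 ≤ n) : 2 * jacoInDeg (n+1) ≤ n := by
  rw [jacoInDeg_eq]
  have hsub : ((Finset.range (n+1)).filter (fun k => 1 ≤ k ∧ n+1 ≤ 2 * k - jacoInDeg k))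
      ⊆ Finset.Ico ((n+3)/2) (n+1) := by
    intro k hk
    simp only [Finset.mem_filter, Finset.mem_range] at hk
    obtain ⟨hkr, hk1, hk2⟩ := hk
    have hk2' : 2 ≤ k := by
      by_contra h
      have hk1' : k = 1 := by omega
      subst hk1'
      have h0 : jacoInDeg 1 = 0 := by rw [jacoInDeg_eq, Finset.range_one, Finset.filter_singleton]; simp
      omega
    have := one_le_jacoInDeg k hk2'
    simp only [Finset.mem_Ico]
    omega
  have := Finset.card_le_card hsub
  rw [Nat.card_Ico] at this
  omega



theorem runSeq_append (l₁ l₂ : List (ℕ × ℕ)) : ∀ s, runSeq s (l₁ ++ l₂) = runSeq (runSeq s l₁) l₂ := by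
  induction l₁ with
  | nil => intro s; rfl
  | cons a l ih => intro s; simp only [List.cons_append, runSeq]; exact ih _

theorem validSeq_append (l₁ l₂ : List (ℕ × ℕ)) : ∀ s,
    ValidSeq s (l₁ ++ l₂) ↔ ValidSeq s l₁ ∧ ValidSeq (runSeq s l₁) l₂ := by
  induction l₁ with
  | nil => intro s; simp [ValidSeq, runSeq]
  | cons a l ih =>
    intro s
    rw [show (a :: l) ++ l₂ = a :: (l ++ l₂) from rfl]
    show validArc s a ∧ ValidSeq (predStep s a) (l ++ l₂) ↔ _
    rw [ih]
    show _ ↔ (validArc s a ∧ ValidSeq (predStep s a) l) ∧ ValidSeq (runSeq (predStep s a) l) l₂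
    rw [and_assoc]

theorem mem_arcs_of_validSeq {l : List (ℕ × ℕ)} : ∀ {s : PPState}, ValidSeq s l →
    (∀ a ∈ l, a ∈ s.arcs) ∧ l.Nodup := by
  induction l with
  | nil => intro s _; exact ⟨by simp, List.nodup_nil⟩
  | cons a l ih =>
    intro s h
    obtain ⟨hv, hrest⟩ := h
    obtain ⟨hmem, hnd⟩ := ih hrest
    have hsub : ∀ b ∈ l, b ∈ s.arcs.erase a := hmem
    constructor
    · intro b hb
      rcases List.mem_cons.mp hb with rfl | hb
      · exact hv.1
      · exact Finset.mem_of_mem_erase (hsub b hb)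
    · refine List.nodup_cons.mpr ⟨fun hcon => ?_, hnd⟩
      exact (Finset.notMem_erase a s.arcs) (hsub a hcon)

theorem length_le_card {l : List (ℕ × ℕ)} : ∀ {s : PPState}, ValidSeq s l →
    l.length ≤ s.arcs.card := by
  induction l with
  | nil => intro s _; simp
  | cons a l ih =>
    intro s h
    have h1 : 1 ≤ s.arcs.card := Finset.card_pos.mpr ⟨a, h.1.1⟩
    have := ih h.2
    simp only [predStep] at this
    rw [Finset.card_erase_of_mem h.1.1] at this
    simp only [List.length_cons]
    omega

theorem resid_predStep {n : ℕ} {s : PPState} {a : ℕ × ℕ} (hne : a.1 ≠ a.2)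
    (h1 : a.1 ∈ Finset.Icc 1 n) (h2 : a.2 ∈ Finset.Icc 1 n)
    (hp1 : 1 ≤ s.pop a.1) (hp2 : 1 ≤ s.pop a.2) :
    resid n (predStep s a) + 2 = resid n s := by
  have key : ∀ v ∈ Finset.Icc 1 n,
      ((if v = a.1 ∨ v = a.2 then s.pop v - 1 else s.pop v)
        + ((if v = a.1 then 1 else 0) + (if v = a.2 then 1 else 0))) = s.pop v := by
    intro v _
    by_cases e1 : v = a.1
    · subst e1; simp [hne]; omega
    · by_cases e2 : v = a.2
      · subst e2; simp [e1]; omega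
      · simp [e1, e2]
  have hsum := Finset.sum_congr rfl key
  rw [Finset.sum_add_distrib, Finset.sum_add_distrib] at hsum
  rw [Finset.sum_ite_eq' (Finset.Icc 1 n) a.1 (fun _ => 1),
      Finset.sum_ite_eq' (Finset.Icc 1 n) a.2 (fun _ => 1), if_pos h1, if_pos h2] at hsum
  simpa [resid, predStep] using hsum

theorem resid_run {n : ℕ} {l : List (ℕ × ℕ)} : ∀ {s : PPState},
    (∀ a ∈ s.arcs, a.1 ≠ a.2 ∧ a.1 ∈ Finset.Icc 1 n ∧ a.2 ∈ Finset.Icc 1 n) →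
    ValidSeq s l → resid n (runSeq s l) + 2 * l.length = resid n s := by
  induction l with
  | nil => intro s _ _; simp [runSeq]
  | cons a l ih =>
    intro s hgood h
    obtain ⟨hg1, hg2, hg3⟩ := hgood a h.1.1
    have hstep := resid_predStep (s := s) hg1 hg2 hg3 h.1.2.1 h.1.2.2
    have hgood' : ∀ b ∈ (predStep s a).arcs, b.1 ≠ b.2 ∧ b.1 ∈ Finset.Icc 1 n ∧ b.2 ∈ Finset.Icc 1 n :=
      fun b hb => hgood b (Finset.mem_of_mem_erase hb)
    have := ih hgood' h.2
    simp only [runSeq, List.length_cons]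
    omega

def lenSet (A : Finset (ℕ × ℕ)) : Set ℕ :=
  {k | ∃ l, ValidSeq (initState A) l ∧ l.length = k}

noncomputable def maxLen (A : Finset (ℕ × ℕ)) : ℕ := sSup (lenSet A)

theorem lenSet_nonempty (A : Finset (ℕ × ℕ)) : (lenSet A).Nonempty :=
  ⟨0, [], trivial, rfl⟩

theorem lenSet_bdd (A : Finset (ℕ × ℕ)) : BddAbove (lenSet A) := by
  refine ⟨A.card, ?_⟩
  rintro k ⟨l, hl, rfl⟩
  exact length_le_card hl

theorem maxLen_mem (A : Finset (ℕ × ℕ)) : maxLen A ∈ lenSet A :=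
  Nat.sSup_mem (lenSet_nonempty A) (lenSet_bdd A)

theorem le_maxLen {A : Finset (ℕ × ℕ)} {l : List (ℕ × ℕ)}
    (h : ValidSeq (initState A) l) : l.length ≤ maxLen A :=
  le_csSup (lenSet_bdd A) ⟨l, h, rfl⟩

theorem grogD_eq {n : ℕ} {A : Finset (ℕ × ℕ)}
    (good : ∀ a ∈ A, a.1 ≠ a.2 ∧ a.1 ∈ Finset.Icc 1 n ∧ a.2 ∈ Finset.Icc 1 n) :
    grogD n A + 2 * maxLen A = resid n (initState A) := by
  obtain ⟨l, hl, hlen⟩ := maxLen_mem A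
  have hterm : Terminal (runSeq (initState A) l) := by
    intro a ha hv
    have : ValidSeq (initState A) (l ++ [a]) := by
      rw [validSeq_append]
      exact ⟨hl, hv, trivial⟩
    have := le_maxLen this
    simp only [List.length_append, List.length_singleton] at this
    omega
  have hresid := resid_run good hl
  have hmemset : resid n (runSeq (initState A) l) ∈
      {r | ∃ l, IsStrategy (initState A) l ∧ resid n (runSeq (initState A) l) = r} :=
    ⟨l, ⟨hl, hterm⟩, rfl⟩
  have hub : grogD n A ≤ resid n (runSeq (initState A) l) := Nat.sInf_le hmemset
  have hlb : resid n (runSeq (initState A) l) ≤ grogD n A := by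
    apply le_csInf ⟨_, hmemset⟩
    rintro r ⟨l', ⟨hl', _⟩, rfl⟩
    have h1 := resid_run good hl'
    have h2 := le_maxLen hl'
    omega
  have : grogD n A = resid n (runSeq (initState A) l) := le_antisymm hub hlb
  omega

theorem two_mul_maxLen_le {n : ℕ} {A : Finset (ℕ × ℕ)}
    (good : ∀ a ∈ A, a.1 ≠ a.2 ∧ a.1 ∈ Finset.Icc 1 n ∧ a.2 ∈ Finset.Icc 1 n) :
    2 * maxLen A ≤ resid n (initState A) := by
  obtain ⟨l, hl, hlen⟩ := maxLen_mem A
  have := resid_run good hl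
  omega

theorem dominance (n : ℕ) (l : List (ℕ × ℕ)) : ∀ (s t : PPState), ValidSeq s l →
    (∀ a ∈ s.arcs, a.2 ≠ n + 1 → a ∈ t.arcs) → (∀ v, s.pop v ≤ t.pop v) →
    ValidSeq t (l.filter (fun a => a.2 ≠ n + 1)) := by
  induction l with
  | nil => intro s t _ _ _; exact trivial
  | cons a l ih =>
    intro s t h harcs hpop
    by_cases hcase : a.2 = n + 1
    · rw [List.filter_cons_of_neg (by simp [hcase])]
      refine ih (predStep s a) t h.2 ?_ ?_
      · intro b hb hb2
        exact harcs b (Finset.mem_of_mem_erase hb) hb2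
      · intro v
        refine le_trans ?_ (hpop v)
        simp only [predStep]
        split <;> omega
    · rw [List.filter_cons_of_pos (by simp [hcase])]
      have hmem : a ∈ t.arcs := harcs a h.1.1 hcase
      refine ⟨⟨hmem, le_trans h.1.2.1 (hpop a.1), le_trans h.1.2.2 (hpop a.2)⟩, ?_⟩
      refine ih (predStep s a) (predStep t a) h.2 ?_ ?_
      · intro b hb hb2
        have hbne : b ≠ a := Finset.ne_of_mem_erase hb
        exact Finset.mem_erase.mpr ⟨hbne, harcs b (Finset.mem_of_mem_erase hb) hb2⟩
      · intro v
        simp only [predStep]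
        split <;> [exact Nat.sub_le_sub_right (hpop v) 1; exact hpop v]


theorem jacoArcs_good (m : ℕ) : ∀ a ∈ jacoArcs m,
    a.1 ≠ a.2 ∧ a.1 ∈ Finset.Icc 1 m ∧ a.2 ∈ Finset.Icc 1 m := by
  intro a ha
  rw [jacoArcs, Finset.mem_filter, Finset.mem_product] at ha
  exact ⟨Nat.ne_of_lt ha.2.2.1, ha.1.1, ha.1.2⟩

theorem jacoArcs_mono {n : ℕ} {a : ℕ × ℕ} (ha : a ∈ jacoArcs (n+1)) (h2 : a.2 ≠ n + 1) :
    a ∈ jacoArcs n := by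
  rw [jacoArcs, Finset.mem_filter, Finset.mem_product, Finset.mem_Icc, Finset.mem_Icc] at ha ⊢
  obtain ⟨⟨⟨h11, h12⟩, h21, h22⟩, harc⟩ := ha
  have hlt := harc.2.1
  exact ⟨⟨⟨h11, by omega⟩, h21, by omega⟩, harc⟩

theorem maxLen_jaco_succ (n : ℕ) :
    maxLen (jacoArcs (n+1)) ≤ maxLen (jacoArcs n) + jacoInDeg (n+1) := by
  obtain ⟨l, hl, hlen⟩ := maxLen_mem (jacoArcs (n+1))
  have hdom : ValidSeq (initState (jacoArcs n)) (l.filter (fun a => a.2 ≠ n + 1)) := by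
    refine dominance n l _ _ hl ?_ (fun v => le_refl _)
    intro a ha h2
    exact jacoArcs_mono ha h2
  have h1 : (l.filter (fun a => a.2 ≠ n + 1)).length ≤ maxLen (jacoArcs n) := le_maxLen hdom
  obtain ⟨hmem, hnodup⟩ := mem_arcs_of_validSeq hl
  set l₂ := l.filter (fun a => a.2 = n + 1) with hl₂
  have hnd₂ : l₂.Nodup := hnodup.sublist List.filter_sublist
  have hsplit : l.length = (l.filter (fun a => a.2 ≠ n + 1)).length + l₂.length := by
    have hfa := List.length_eq_length_filter_add (l := l) (fun a => a.2 ≠ n + 1)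
    have hfe : (fun x : ℕ × ℕ => !decide (x.2 ≠ n + 1)) = (fun a : ℕ × ℕ => decide (a.2 = n + 1)) := by
      funext a; by_cases h : a.2 = n + 1 <;> simp [h]
    rw [hfa, hfe, hl₂]
  have hsubS : l₂.toFinset ⊆ (jacoArcs (n+1)).filter (fun a => a.2 = n + 1) := by
    intro a ha
    rw [List.mem_toFinset, hl₂, List.mem_filter] at ha
    refine Finset.mem_filter.mpr ⟨hmem a ha.1, by simpa using ha.2⟩
  have hcard₂ : l₂.length ≤ ((jacoArcs (n+1)).filter (fun a => a.2 = n + 1)).card := by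
    rw [← List.toFinset_card_of_nodup hnd₂]
    exact Finset.card_le_card hsubS
  have hS : ((jacoArcs (n+1)).filter (fun a => a.2 = n + 1)).card ≤ jacoInDeg (n+1) := by
    rw [jacoInDeg_eq]
    refine Finset.card_le_card_of_injOn Prod.fst ?_ ?_
    · intro a ha
      rw [Finset.mem_coe, Finset.mem_filter] at ha
      obtain ⟨haJ, ha2⟩ := ha
      rw [jacoArcs, Finset.mem_filter, Finset.mem_product] at haJ
      obtain ⟨_, h1a, h2a, h3a⟩ := haJ
      rw [ha2] at h2a h3a
      refine Finset.mem_coe.mpr (Finset.mem_filter.mpr ⟨Finset.mem_range.mpr h2a, h1a, h3a⟩)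
    · intro a ha b hb hab
      simp only [Finset.coe_filter, Set.mem_setOf_eq, Finset.mem_filter] at ha hb
      exact Prod.ext hab (ha.2.trans hb.2.symm)
  omega

/-- For every `n ≥ 2`, the grog numbers of the finite Jaco graphs are
strictly increasing: `g(J_{n+1}(1)) > g(J_n(1))`. -/
theorem grog_number_of_Jaco_strict_mono (n : ℕ) (hn : 2 ≤ n) :
    grogJaco n < grogJaco (n + 1) := by
  have g1 := grogD_eq (jacoArcs_good n)
  have g2 := grogD_eq (jacoArcs_good (n+1))
  have hR : resid (n+1) (initState (jacoArcs (n+1))) = resid n (initState (jacoArcs n)) + (n+1) := by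
    show (∑ v ∈ Finset.Icc 1 (n+1), id v) = (∑ v ∈ Finset.Icc 1 n, id v) + (n+1)
    rw [Finset.sum_Icc_succ_top (by omega : 1 ≤ n + 1) id]
    rfl
  have hM := maxLen_jaco_succ n
  have hD := two_mul_jacoInDeg_le n hn
  unfold grogJaco
  omega
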